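/- arXiv:1306.3525 — 5 statements merged into one kernel-verified Lean document; each statement's English description precedes it below -/
import Mathlib

section
/- Let $R_1,\dots,R_n \ge 0$ and $T_1,\dots,T_n \ge 0$ be reals with $\sum_i T_i \le B$ for some $B > 0$. Then $\sum_{i=1}^n \max\{0,\, 1 - (\sum_{j<i} T_j)/B\} \cdot R_i \ge \sum_{i=1}^n (1 - (\sum_{j<i} T_j)/B) \cdot R_i$, and if additionally the sequence $R_i/T_i$ is non-increasing (with $T_i > 0$), then $\sum_{i=1}^n (1 - (\sum_{j<i} T_j)/B) R_i \ge \frac{1}{2}\sum_{i=1}^n R_i$. -/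
open Finset

lemma key_ineq (R T : ℕ → ℝ) (hR : ∀ i, 0 ≤ R i) (hT : ∀ i, 0 ≤ T i)
    (hmono : ∀ i j, i ≤ j → R j * T i ≤ R i * T j) (n : ℕ) :
    2 * ∑ i ∈ range n, R i * (∑ j ∈ range i, T j) ≤
      (∑ i ∈ range n, R i) * (∑ i ∈ range n, T i) := by
  induction n with
  | zero => simp
  | succ n ih =>
    rw [sum_range_succ, sum_range_succ, sum_range_succ]
    have h1 : R n * (∑ j ∈ range n, T j) ≤ (∑ j ∈ range n, R j) * T n := by
      rw [Finset.mul_sum, Finset.sum_mul]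
      exact Finset.sum_le_sum fun j hj => hmono j n (le_of_lt (mem_range.mp hj))
    nlinarith [hR n, hT n, mul_nonneg (hR n) (hT n)]

theorem stmt_0 (n : ℕ) (R T : ℕ → ℝ) (B : ℝ) (hB : 0 < B)
    (hR : ∀ i, 0 ≤ R i) (hT : ∀ i, 0 ≤ T i)
    (hsum : ∑ i ∈ range n, T i ≤ B) :
    (∑ i ∈ range n, max 0 (1 - (∑ j ∈ range i, T j) / B) * R i ≥
      ∑ i ∈ range n, (1 - (∑ j ∈ range i, T j) / B) * R i) ∧
    ((∀ i, 0 < T i) → (∀ i j, i ≤ j → R j * T i ≤ R i * T j) →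
      ∑ i ∈ range n, (1 - (∑ j ∈ range i, T j) / B) * R i ≥
        (1 / 2) * ∑ i ∈ range n, R i) := by
  constructor
  · apply Finset.sum_le_sum
    intro i _
    exact mul_le_mul_of_nonneg_right (le_max_right _ _) (hR i)
  · intro _ hmono
    have hkey := key_ineq R T hR hT hmono n
    have hRn : 0 ≤ ∑ i ∈ range n, R i := Finset.sum_nonneg fun i _ => hR i
    have h2 : (∑ i ∈ range n, R i) * (∑ i ∈ range n, T i) ≤
        (∑ i ∈ range n, R i) * B := mul_le_mul_of_nonneg_left hsum hRn
    have h3 : 2 * ∑ i ∈ range n, R i * (∑ j ∈ range i, T j) ≤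
        (∑ i ∈ range n, R i) * B := le_trans hkey h2
    have heq : ∑ i ∈ range n, (1 - (∑ j ∈ range i, T j) / B) * R i =
        (∑ i ∈ range n, R i) - (∑ i ∈ range n, R i * (∑ j ∈ range i, T j)) / B := by
      rw [Finset.sum_div, ← Finset.sum_sub_distrib]
      apply Finset.sum_congr rfl
      intro i _
      field_simp
    rw [heq, ge_iff_le, le_sub_iff_add_le]
    have hd : (∑ i ∈ range n, R i * (∑ j ∈ range i, T j)) / B ≤
        (∑ i ∈ range n, R i) / 2 := by
      rw [div_le_div_iff₀ hB (by norm_num)]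
      linarith
    linarith
end

section
/- Let $R_1,\dots,R_n \ge 0$ and $T_1,\dots,T_n \ge 0$ with $\sum_i T_i \le B/c$ for some $B>0$ and $c \ge 1$, and suppose $R_1/T_1 \ge R_2/T_2 \ge \cdots \ge R_n/T_n$ (all $T_i>0$). Then $\sum_{i=1}^n (1 - (\sum_{j<i} T_j)/B) R_i \ge (1 - \frac{1}{2c}) \sum_{i=1}^n R_i$. -/
open Finset

lemma pair_sum_id (R T : ℕ → ℝ) (n : ℕ) :
    ∑ i ∈ range n, ∑ j ∈ range i, (T j * R i + R j * T i)
      + ∑ i ∈ range n, T i * R i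
      = (∑ i ∈ range n, T i) * (∑ i ∈ range n, R i) := by
  induction n with
  | zero => simp
  | succ n ih =>
    rw [sum_range_succ, sum_range_succ, sum_range_succ (f := T), sum_range_succ (f := R)]
    rw [sum_add_distrib]
    have e1 : ∑ j ∈ range n, T j * R n = (∑ j ∈ range n, T j) * R n := (sum_mul _ _ _).symm
    have e2 : ∑ j ∈ range n, R j * T n = (∑ j ∈ range n, R j) * T n := (sum_mul _ _ _).symm
    rw [e1, e2]
    nlinarith [ih]

theorem stmt_1 (n : ℕ) (R T : ℕ → ℝ) (B c : ℝ) (hB : 0 < B) (hc : 1 ≤ c)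
    (hR : ∀ i, 0 ≤ R i) (hT : ∀ i, 0 < T i)
    (horder : ∀ i j, i ≤ j → R j * T i ≤ R i * T j)
    (hsum : ∑ i ∈ range n, T i ≤ B / c) :
    ∑ i ∈ range n, (1 - (∑ j ∈ range i, T j) / B) * R i ≥
      (1 - 1 / (2 * c)) * ∑ i ∈ range n, R i := by
  have hc0 : (0:ℝ) < c := lt_of_lt_of_le one_pos hc
  set A : ℝ := ∑ i ∈ range n, (∑ j ∈ range i, T j) * R i with hA
  have hAle : 2 * A ≤ (∑ i ∈ range n, T i) * (∑ i ∈ range n, R i) := by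
    have h1 : A ≤ ∑ i ∈ range n, ∑ j ∈ range i, R j * T i := by
      rw [hA]
      apply sum_le_sum
      intro i _
      rw [sum_mul]
      apply sum_le_sum
      intro j hj
      simpa [mul_comm] using horder j i (le_of_lt (mem_range.mp hj))
    have h2 : ∑ i ∈ range n, ∑ j ∈ range i, (T j * R i + R j * T i)
        = A + ∑ i ∈ range n, ∑ j ∈ range i, R j * T i := by
      rw [hA, ← sum_add_distrib]
      congr 1; ext i
      rw [sum_add_distrib, sum_mul]
    have h3 := pair_sum_id R T n
    rw [h2] at h3
    have h4 : 0 ≤ ∑ i ∈ range n, T i * R i :=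
      sum_nonneg fun i _ => mul_nonneg (hT i).le (hR i)
    linarith
  have hRnn : 0 ≤ ∑ i ∈ range n, R i := sum_nonneg fun i _ => hR i
  have hTR : (∑ i ∈ range n, T i) * (∑ i ∈ range n, R i)
      ≤ (B / c) * (∑ i ∈ range n, R i) :=
    mul_le_mul_of_nonneg_right hsum hRnn
  have hAB : A ≤ B / (2 * c) * (∑ i ∈ range n, R i) := by
    have h := mul_le_mul_of_nonneg_right (le_trans hAle hTR) hc0.le
    have he : (B / c) * (∑ i ∈ range n, R i) * c = B * (∑ i ∈ range n, R i) := by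
      field_simp
    rw [he] at h
    rw [div_mul_eq_mul_div, le_div_iff₀ (by positivity : (0:ℝ) < 2 * c)]
    nlinarith
  have hsplit : ∑ i ∈ range n, (1 - (∑ j ∈ range i, T j) / B) * R i
      = (∑ i ∈ range n, R i) - A / B := by
    rw [hA, sum_div, ← sum_sub_distrib]
    congr 1; ext i
    field_simp
  rw [hsplit]
  have hdiv : A / B ≤ 1 / (2 * c) * (∑ i ∈ range n, R i) := by
    rw [div_le_iff₀ hB]
    calc A ≤ B / (2 * c) * (∑ i ∈ range n, R i) := hAB
    _ = 1 / (2 * c) * (∑ i ∈ range n, R i) * B := by ring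
  linarith [mul_le_mul_of_nonneg_right (le_refl (1:ℝ)) hRnn]
end

section
/- Let $f^-, f^+, g^-, g^+, \lambda^-, \lambda^+ \ge 0$ with $\lambda^- \le \lambda^+$, and suppose $\lambda^- C + (f^- - \lambda^- g^-) \ge V$ and $\lambda^+ C + (f^+ - \lambda^+ g^+) \ge V$ where $g^- > C \ge g^+$ and $C > 0$. Let $a \in [0,1]$ be the unique value with $a g^- + (1-a) g^+ = C$. Then $a f^- + (1-a) f^+ \ge V - (1-a)(\lambda^+ - \lambda^-)(C - g^+) \ge V - (\lambda^+ - \lambda^-) C$. -/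
theorem stmt_7 (fm fp gm gp lm lp C V a : ℝ)
    (hfm : 0 ≤ fm) (hfp : 0 ≤ fp) (hgm : 0 ≤ gm) (hgp : 0 ≤ gp)
    (hlm : 0 ≤ lm) (hlp : 0 ≤ lp) (hll : lm ≤ lp)
    (h1 : lm * C + (fm - lm * gm) ≥ V)
    (h2 : lp * C + (fp - lp * gp) ≥ V)
    (hgC : gp ≤ C) (hCg : C < gm) (hC : 0 < C)
    (ha0 : 0 ≤ a) (ha1 : a ≤ 1)
    (haeq : a * gm + (1 - a) * gp = C) :
    a * fm + (1 - a) * fp ≥ V - (1 - a) * (lp - lm) * (C - gp) ∧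
    V - (1 - a) * (lp - lm) * (C - gp) ≥ V - (lp - lm) * C := by
  constructor
  · nlinarith [mul_nonneg ha0 (sub_nonneg.2 h1), mul_nonneg (sub_nonneg.2 ha1) (sub_nonneg.2 h2), mul_nonneg ha0 hlm]
  · nlinarith [mul_nonneg (mul_nonneg ha0 (sub_nonneg.2 hll)) (sub_nonneg.2 hgC), mul_nonneg (mul_nonneg (sub_nonneg.2 ha1) (sub_nonneg.2 hll)) hgp, mul_nonneg (sub_nonneg.2 hll) hgp]
end

section
/- In the setting of the previous statement, if additionally $\lambda^+ - \lambda^- \le \epsilon V / (2C)$ for some $\epsilon \in (0,1]$, then $a f^- + (1-a) f^+ \ge V(1 - \epsilon/2) \ge V/(1+\epsilon)$. -/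
theorem stmt_8 (fm fp gm gp lm lp C V a ε : ℝ)
    (hfm : 0 ≤ fm) (hfp : 0 ≤ fp) (hgm : 0 ≤ gm) (hgp : 0 ≤ gp)
    (hlm : 0 ≤ lm) (hlp : 0 ≤ lp) (hll : lm ≤ lp)
    (h1 : lm * C + (fm - lm * gm) ≥ V)
    (h2 : lp * C + (fp - lp * gp) ≥ V)
    (hgC : gp ≤ C) (hCg : C < gm) (hC : 0 < C)
    (ha0 : 0 ≤ a) (ha1 : a ≤ 1)
    (haeq : a * gm + (1 - a) * gp = C)
    (hV : 0 ≤ V)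
    (hε0 : 0 < ε) (hε1 : ε ≤ 1)
    (hgap : lp - lm ≤ ε * V / (2 * C)) :
    a * fm + (1 - a) * fp ≥ V * (1 - ε / 2) ∧ V * (1 - ε / 2) ≥ V / (1 + ε) := by
  have hgap' : (lp - lm) * C ≤ ε * V / 2 := by
    have h := mul_le_mul_of_nonneg_right hgap hC.le
    have : ε * V / (2 * C) * C = ε * V / 2 := by field_simp
    linarith [this ▸ h]
  have key : a * (gm - C) = (1 - a) * (C - gp) := by linear_combination haeq
  have hA : a * fm ≥ a * (V + lm * (gm - C)) :=
    mul_le_mul_of_nonneg_left (by linarith) ha0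
  have hB : (1 - a) * fp ≥ (1 - a) * (V + lp * (gp - C)) :=
    mul_le_mul_of_nonneg_left (by linarith) (by linarith)
  have hc1 : (1 - a) * (C - gp) ≤ C := by nlinarith
  have hc2 : 0 ≤ (1 - a) * (C - gp) := by nlinarith
  have hloss : (lp - lm) * ((1 - a) * (C - gp)) ≤ ε * V / 2 := by
    nlinarith [mul_le_mul_of_nonneg_left hc1 (by linarith : (0:ℝ) ≤ lp - lm)]
  constructor
  · nlinarith [hA, hB, key, hloss]
  · rw [ge_iff_le, div_le_iff₀ (by linarith)]
    nlinarith [mul_nonneg hV (mul_nonneg hε0.le (sub_nonneg.mpr hε1))]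
end

section
/- Let $\gamma \in [0,1)$, let $B > 0$, and let $R_1,\dots,R_n, T_1,\dots,T_n \ge 0$ satisfy $\sum_i T_i \le (1-\gamma) B$ and $R_1/T_1 \ge \cdots \ge R_n/T_n$ (all $T_i > 0$). Then $(1-\gamma) \sum_{i=1}^n \left(1 - \frac{\sum_{j<i} T_j}{(1-\gamma)B}\right) R_i \ge \frac{1-\gamma}{2} \sum_i R_i$. -/
open Finset

lemma key_prefix (n : ℕ) (R T : ℕ → ℝ) (hR : ∀ i, 0 ≤ R i) (hT : ∀ i, 0 < T i)
    (horder : ∀ i j, i ≤ j → R j * T i ≤ R i * T j) :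
    2 * ∑ i ∈ range n, (∑ j ∈ range i, T j) * R i ≤
      (∑ i ∈ range n, T i) * (∑ i ∈ range n, R i) := by
  induction n with
  | zero => simp
  | succ n ih =>
    rw [sum_range_succ, sum_range_succ, sum_range_succ]
    have h1 : (∑ j ∈ range n, T j) * R n ≤ T n * ∑ j ∈ range n, R j := by
      rw [sum_mul, mul_sum]
      refine Finset.sum_le_sum fun j hj => ?_
      have hjn : j ≤ n := le_of_lt (mem_range.mp hj)
      have := horder j n hjn
      linarith [this]
    have hTn : 0 ≤ T n := (hT n).le
    have hRn : 0 ≤ R n := hR n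
    have hTsum : 0 ≤ ∑ j ∈ range n, T j := Finset.sum_nonneg fun j _ => (hT j).le
    have hRsum : 0 ≤ ∑ j ∈ range n, R j := Finset.sum_nonneg fun j _ => hR j
    nlinarith [ih]

theorem stmt_10 (n : ℕ) (γ B : ℝ) (hγ0 : 0 ≤ γ) (hγ1 : γ < 1) (hB : 0 < B)
    (R T : ℕ → ℝ) (hR : ∀ i, 0 ≤ R i) (hT : ∀ i, 0 < T i)
    (horder : ∀ i j, i ≤ j → R j * T i ≤ R i * T j)
    (hsum : ∑ i ∈ range n, T i ≤ (1 - γ) * B) :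
    (1 - γ) * ∑ i ∈ range n, (1 - (∑ j ∈ range i, T j) / ((1 - γ) * B)) * R i ≥
      (1 - γ) / 2 * ∑ i ∈ range n, R i := by
  set C := (1 - γ) * B with hC
  have hCpos : 0 < C := mul_pos (by linarith) hB
  have hkey := key_prefix n R T hR hT horder
  have hRsum : 0 ≤ ∑ i ∈ range n, R i := Finset.sum_nonneg fun j _ => hR j
  have h2 : (∑ i ∈ range n, T i) * (∑ i ∈ range n, R i) ≤ C * ∑ i ∈ range n, R i :=
    mul_le_mul_of_nonneg_right hsum hRsum
  have hX : 2 * ∑ i ∈ range n, (∑ j ∈ range i, T j) * R i ≤ C * ∑ i ∈ range n, R i :=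
    hkey.trans h2
  have hexp : ∑ i ∈ range n, (1 - (∑ j ∈ range i, T j) / C) * R i =
      (∑ i ∈ range n, R i) - (∑ i ∈ range n, (∑ j ∈ range i, T j) * R i) / C := by
    rw [Finset.sum_congr rfl fun i _ => show (1 - (∑ j ∈ range i, T j) / C) * R i
          = R i - (∑ j ∈ range i, T j) * R i / C by field_simp,
      Finset.sum_sub_distrib, Finset.sum_div]
  rw [hexp]
  have hdiv : (∑ i ∈ range n, (∑ j ∈ range i, T j) * R i) / C ≤ (∑ i ∈ range n, R i) / 2 := by
    rw [div_le_div_iff₀ hCpos (by norm_num)]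
    linarith
  have h1γ : 0 < 1 - γ := by linarith
  have : (∑ i ∈ range n, R i) - (∑ i ∈ range n, (∑ j ∈ range i, T j) * R i) / C ≥
      (∑ i ∈ range n, R i) / 2 := by linarith
  calc (1 - γ) * ((∑ i ∈ range n, R i) - (∑ i ∈ range n, (∑ j ∈ range i, T j) * R i) / C)
      ≥ (1 - γ) * ((∑ i ∈ range n, R i) / 2) := by
        exact mul_le_mul_of_nonneg_left this h1γ.le
    _ = (1 - γ) / 2 * ∑ i ∈ range n, R i := by ring
end
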